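/- Let F = (f₀,f₁) ∈ V_a with f₀ = h′ for h ∈ 𝒮(ℝ), and set θ₊ := (f₁ + h)/2 and θ₋ := (f₁ − h)/2 (so θ₊, θ₋ ∈ 𝒮(ℝ)). Then all four integrals below are finite and ∫_ℝ ( ‖𝓕f₀(p)‖²/ω(p) + ω(p)·‖𝓕f₁(p)‖² ) dp = 2∫_ℝ ω(p)·‖𝓕θ₊(p)‖² dp + 2∫_ℝ ω(p)·‖𝓕θ₋(p)‖² dp. (The one-particle Fock norm of an observable equals twice the sum of the chiral one-particle norms of its left/right mover components: ‖T_a F‖² = 2‖T_{a+}θ₊‖² + 2‖T_{a−}θ₋‖².) -/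

import Mathlib

open MeasureTheory Filter Topology Real
open scoped FourierTransform
open SchwartzMap

noncomputable def ofRealS (g : SchwartzMap ℝ ℝ) : SchwartzMap ℝ ℂ where
  toFun x := (g x : ℂ)
  smooth' := Complex.ofRealCLM.contDiff.comp g.smooth'
  decay' := by
    intro k n
    obtain ⟨C, -, hC⟩ := g.decay k n
    refine ⟨C, fun x => ?_⟩
    have : ‖iteratedFDeriv ℝ n (fun x => ((g x : ℝ) : ℂ)) x‖
        = ‖iteratedFDeriv ℝ n (⇑g) x‖ :=
      Complex.ofRealLI.norm_iteratedFDeriv_comp_left g.smooth'.contDiffAt (mod_cast le_top)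
    rw [this]
    exact hC x

@[simp] lemma ofRealS_apply (g : SchwartzMap ℝ ℝ) (x : ℝ) : ofRealS g x = (g x : ℂ) := rfl

lemma int_aux (G : SchwartzMap ℝ ℂ) :
    Integrable (fun p : ℝ => (2 * π * |p|) * ‖G p‖ ^ 2) := by
  obtain ⟨C, hCpos, hC⟩ := G.decay 1 0
  refine Integrable.mono' ((G.integrable.norm).const_mul (2 * π * C)) ?_ ?_
  · exact (((continuous_const.mul continuous_abs).mul
      ((G.continuous.norm).pow 2)).aestronglyMeasurable)
  · filter_upwards with p
    have h1 : |p| * ‖G p‖ ≤ C := by simpa using hC p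
    have h2 : (0:ℝ) ≤ ‖G p‖ := norm_nonneg _
    have h3 : (0:ℝ) ≤ |p| := abs_nonneg p
    have : ‖(2 * π * |p|) * ‖G p‖ ^ 2‖ = 2 * π * (|p| * ‖G p‖) * ‖G p‖ := by
      rw [Real.norm_eq_abs, abs_of_nonneg (by positivity)]; ring
    rw [this]
    have := Real.pi_pos
    nlinarith [mul_le_mul_of_nonneg_right h1 h2]


set_option maxHeartbeats 1000000

/-- Let `F = (f₀,f₁) ∈ V_a` with `f₀ = h′`, `h ∈ 𝒮(ℝ)`, and set
`θ₊ = (f₁ + h)/2`, `θ₋ = (f₁ − h)/2`.  Then all four integrals below are finite and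
`∫ (‖𝓕f₀‖²/ω + ω‖𝓕f₁‖²) = 2∫ ω‖𝓕θ₊‖² + 2∫ ω‖𝓕θ₋‖²` with `ω(p) = 2π|p|`:
the one-particle Fock norm of an observable equals twice the sum of the chiral
one-particle norms of its left/right mover components. -/
theorem stmt_12 (h f₁ : SchwartzMap ℝ ℝ) :
    Integrable (fun p : ℝ =>
      ‖𝓕 (fun x : ℝ => ((deriv (⇑h) x : ℝ) : ℂ)) p‖ ^ 2 / (2 * π * |p|)) ∧
    Integrable (fun p : ℝ =>
      (2 * π * |p|) * ‖𝓕 (fun x : ℝ => (f₁ x : ℂ)) p‖ ^ 2) ∧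
    Integrable (fun p : ℝ =>
      (2 * π * |p|) * ‖𝓕 (fun x : ℝ => (((f₁ x + h x) / 2 : ℝ) : ℂ)) p‖ ^ 2) ∧
    Integrable (fun p : ℝ =>
      (2 * π * |p|) * ‖𝓕 (fun x : ℝ => (((f₁ x - h x) / 2 : ℝ) : ℂ)) p‖ ^ 2) ∧
    (∫ p : ℝ, (‖𝓕 (fun x : ℝ => ((deriv (⇑h) x : ℝ) : ℂ)) p‖ ^ 2 / (2 * π * |p|)
        + (2 * π * |p|) * ‖𝓕 (fun x : ℝ => (f₁ x : ℂ)) p‖ ^ 2)) =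
      2 * (∫ p : ℝ, (2 * π * |p|) * ‖𝓕 (fun x : ℝ => (((f₁ x + h x) / 2 : ℝ) : ℂ)) p‖ ^ 2)
      + 2 * (∫ p : ℝ, (2 * π * |p|) * ‖𝓕 (fun x : ℝ => (((f₁ x - h x) / 2 : ℝ) : ℂ)) p‖ ^ 2) := by
  set H : SchwartzMap ℝ ℂ := ofRealS h with hH
  set F1 : SchwartzMap ℝ ℂ := ofRealS f₁ with hF1
  set θp : SchwartzMap ℝ ℂ := (2:ℝ)⁻¹ • (F1 + H) with hθp
  set θm : SchwartzMap ℝ ℂ := (2:ℝ)⁻¹ • (F1 - H) with hθm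
  -- derivative of H
  have hd : deriv (⇑H) = fun x : ℝ => ((deriv (⇑h) x : ℝ) : ℂ) := by
    funext x
    exact ((h.differentiableAt.hasDerivAt).ofReal_comp).deriv
  have hdInt : Integrable (deriv (⇑H)) := by
    rw [hd]
    have : (fun x : ℝ => ((deriv (⇑h) x : ℝ) : ℂ))
        = ⇑(ofRealS (SchwartzMap.derivCLM ℝ ℝ h)) := by
      funext x; simp [SchwartzMap.derivCLM_apply]
    rw [this]; exact SchwartzMap.integrable _
  have hFd : 𝓕 (fun x : ℝ => ((deriv (⇑h) x : ℝ) : ℂ))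
      = fun p : ℝ => (2 * π * Complex.I * p) • 𝓕 (⇑H) p := by
    rw [← hd]
    exact Real.fourier_deriv H.integrable H.differentiable hdInt
  -- rewrite Fourier transforms as Schwartz maps
  have eH : 𝓕 (⇑H) = ⇑(fourierTransformCLM ℝ H) := rfl
  have eF1 : 𝓕 (fun x : ℝ => (f₁ x : ℂ)) = ⇑(fourierTransformCLM ℝ F1) :=
    rfl
  have eθp : 𝓕 (fun x : ℝ => (((f₁ x + h x) / 2 : ℝ) : ℂ)) = ⇑(fourierTransformCLM ℝ θp) := by
    have : (fun x : ℝ => (((f₁ x + h x) / 2 : ℝ) : ℂ)) = ⇑θp := by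
      funext x
      simp [hθp, SchwartzMap.smul_apply, SchwartzMap.add_apply, hF1, hH, Complex.real_smul]
      push_cast; ring
    rw [this]; rfl
  have eθm : 𝓕 (fun x : ℝ => (((f₁ x - h x) / 2 : ℝ) : ℂ)) = ⇑(fourierTransformCLM ℝ θm) := by
    have : (fun x : ℝ => (((f₁ x - h x) / 2 : ℝ) : ℂ)) = ⇑θm := by
      funext x
      simp [hθm, SchwartzMap.smul_apply, SchwartzMap.sub_apply, hF1, hH, Complex.real_smul]
      push_cast; ring
    rw [this]; rfl
  -- first integrand equals a nice function (everywhere)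
  have key1 : (fun p : ℝ => ‖𝓕 (fun x : ℝ => ((deriv (⇑h) x : ℝ) : ℂ)) p‖ ^ 2 / (2 * π * |p|))
      = fun p : ℝ => (2 * π * |p|) * ‖fourierTransformCLM ℝ H p‖ ^ 2 := by
    funext p
    rw [hFd, eH]
    rw [norm_smul]
    have hn : ‖(2 * (π:ℂ) * Complex.I * (p:ℂ))‖ = 2 * π * |p| := by
      simp [Complex.norm_real,
        abs_of_nonneg Real.pi_pos.le]
    rw [hn]
    rcases eq_or_ne p 0 with rfl | hp
    · simp
    · have h2 : (2 : ℝ) * π * |p| ≠ 0 := by positivity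
      field_simp
  have i1 : Integrable (fun p : ℝ =>
      ‖𝓕 (fun x : ℝ => ((deriv (⇑h) x : ℝ) : ℂ)) p‖ ^ 2 / (2 * π * |p|)) := by
    rw [key1]; exact int_aux _
  have i2 : Integrable (fun p : ℝ =>
      (2 * π * |p|) * ‖𝓕 (fun x : ℝ => (f₁ x : ℂ)) p‖ ^ 2) := by
    rw [eF1]; exact int_aux _
  have i3 : Integrable (fun p : ℝ =>
      (2 * π * |p|) * ‖𝓕 (fun x : ℝ => (((f₁ x + h x) / 2 : ℝ) : ℂ)) p‖ ^ 2) := by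
    rw [eθp]; exact int_aux _
  have i4 : Integrable (fun p : ℝ =>
      (2 * π * |p|) * ‖𝓕 (fun x : ℝ => (((f₁ x - h x) / 2 : ℝ) : ℂ)) p‖ ^ 2) := by
    rw [eθm]; exact int_aux _
  refine ⟨i1, i2, i3, i4, ?_⟩
  -- pointwise identity via the parallelogram law
  have key : ∀ p : ℝ,
      ‖𝓕 (fun x : ℝ => ((deriv (⇑h) x : ℝ) : ℂ)) p‖ ^ 2 / (2 * π * |p|)
        + (2 * π * |p|) * ‖𝓕 (fun x : ℝ => (f₁ x : ℂ)) p‖ ^ 2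
      = 2 * ((2 * π * |p|) * ‖𝓕 (fun x : ℝ => (((f₁ x + h x) / 2 : ℝ) : ℂ)) p‖ ^ 2)
        + 2 * ((2 * π * |p|) * ‖𝓕 (fun x : ℝ => (((f₁ x - h x) / 2 : ℝ) : ℂ)) p‖ ^ 2) := by
    intro p
    rw [congrFun key1 p, eF1, eθp, eθm]
    set a : ℂ := fourierTransformCLM ℝ H p
    set b : ℂ := fourierTransformCLM ℝ F1 p
    have hap : fourierTransformCLM ℝ θp p = (2:ℝ)⁻¹ • (b + a) := by
      rw [hθp, _root_.map_smul, map_add]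
      simp only [SchwartzMap.smul_apply, SchwartzMap.add_apply]
      rfl
    have ham : fourierTransformCLM ℝ θm p = (2:ℝ)⁻¹ • (b - a) := by
      rw [hθm, _root_.map_smul, map_sub]
      simp only [SchwartzMap.smul_apply, SchwartzMap.sub_apply]
      rfl
    rw [hap, ham, norm_smul, norm_smul]
    have par := parallelogram_law_with_norm ℂ b a
    have : ‖((2:ℝ)⁻¹ : ℝ)‖ = (2:ℝ)⁻¹ := by norm_num
    rw [this]
    have hc : (0:ℝ) ≤ 2 * π * |p| := by positivity
    nlinarith [par, hc]
  calc ∫ p : ℝ, (‖𝓕 (fun x : ℝ => ((deriv (⇑h) x : ℝ) : ℂ)) p‖ ^ 2 / (2 * π * |p|)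
        + (2 * π * |p|) * ‖𝓕 (fun x : ℝ => (f₁ x : ℂ)) p‖ ^ 2)
      = ∫ p : ℝ, (2 * ((2 * π * |p|) * ‖𝓕 (fun x : ℝ => (((f₁ x + h x) / 2 : ℝ) : ℂ)) p‖ ^ 2)
        + 2 * ((2 * π * |p|) * ‖𝓕 (fun x : ℝ => (((f₁ x - h x) / 2 : ℝ) : ℂ)) p‖ ^ 2)) := by
        exact integral_congr_ae (Filter.Eventually.of_forall key)
    _ = _ := by
        rw [integral_add (i3.const_mul 2) (i4.const_mul 2), integral_const_mul,
          integral_const_mul]
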